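/- Let D be the double fan and G_D its group of homeomorphisms fixing all marked points, with the compact-open topology, acting on D by evaluation. If f : D → ℝ is a bounded continuous function that is π-uniform for this action, then f(e₀) = f(−e₀). -/

import Mathlib

noncomputable section

/-- The group of self-homeomorphisms of a topological space, under composition. -/
instance homeoGroup (X : Type*) [TopologicalSpace X] : Group (X ≃ₜ X) where
  mul a b := b.trans a
  one := Homeomorph.refl X
  inv := Homeomorph.symm
  mul_assoc a b c := Homeomorph.ext fun _ => rfl
  one_mul a := Homeomorph.ext fun _ => rfl
  mul_one a := Homeomorph.ext fun _ => rfl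
  inv_mul_cancel a := Homeomorph.ext fun x => a.symm_apply_apply x

/-- The real Hilbert space `ℓ²(ℕ)`. -/
abbrev DFanAmbient : Type := lp (fun _ : ℕ => ℝ) 2

/-- The `n`-th basic vector `eₙ` of `ℓ²(ℕ)`. -/
def dBasis (n : ℕ) : DFanAmbient := lp.single 2 n 1

/-- The double fan: the union over `n ≥ 1` of the straight-line segments `[e₀, eₙ]`
and `[-e₀, eₙ]` inside `ℓ²(ℕ)`, with the subspace topology. -/
def DoubleFan : Set DFanAmbient :=
  (⋃ n ∈ Set.Ici 1, segment ℝ (dBasis 0) (dBasis n)) ∪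
    ⋃ n ∈ Set.Ici 1, segment ℝ (-dBasis 0) (dBasis n)

/-- The marked points of the double fan: the points `(1 - 1/k)a + (1/k)eₙ` for
`a ∈ {e₀, -e₀}` and `k, n ≥ 1`. -/
def DMarked : Set ↥DoubleFan :=
  {x | ∃ (a : DFanAmbient) (k n : ℕ), (a = dBasis 0 ∨ a = -dBasis 0) ∧ 1 ≤ k ∧ 1 ≤ n ∧
    (x : DFanAmbient) = (1 - ((k : ℝ))⁻¹) • a + ((k : ℝ))⁻¹ • dBasis n}

/-- The group of all homeomorphisms of the double fan fixing every marked point. -/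
def DGroup : Subgroup (↥DoubleFan ≃ₜ ↥DoubleFan) where
  carrier := {g | ∀ x ∈ DMarked, g x = x}
  one_mem' := fun x _ => rfl
  mul_mem' := by
    intro a b ha hb x hx
    show a (b x) = x
    rw [hb x hx, ha x hx]
  inv_mem' := by
    intro a ha x hx
    show a.symm x = x
    conv_lhs => rw [← ha x hx]
    exact a.symm_apply_apply x

/-- The group `DGroup` carries the compact-open topology. -/
instance : TopologicalSpace DGroup :=
  TopologicalSpace.induced
    (fun g : DGroup => toContinuousMap (g : ↥DoubleFan ≃ₜ ↥DoubleFan))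
    ContinuousMap.compactOpen

/-- The base point `e₀` of the double fan. -/
def dPlus : ↥DoubleFan :=
  ⟨dBasis 0, Set.mem_union_left _
    (Set.mem_biUnion (Set.mem_Ici.2 le_rfl) (left_mem_segment ℝ (dBasis 0) (dBasis 1)))⟩

/-- The base point `-e₀` of the double fan. -/
def dMinus : ↥DoubleFan :=
  ⟨-dBasis 0, Set.mem_union_right _
    (Set.mem_biUnion (Set.mem_Ici.2 le_rfl) (left_mem_segment ℝ (-dBasis 0) (dBasis 1)))⟩

open Set

namespace DFanAux

lemma dBasis_apply (n m : ℕ) : (dBasis n : ∀ _ : ℕ, ℝ) m = if m = n then 1 else 0 := by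
  rw [dBasis, lp.single_apply]
  by_cases h : m = n
  · subst h; simp
  · simp [h]

/-- Canonical point of the fan: parameter `t` along the wedge `n` on side `s`. -/
def pt (s : ℝ) (n : ℕ) (t : ℝ) : DFanAmbient := (s * (1 - t)) • dBasis 0 + t • dBasis n

lemma pt_apply_zero {n : ℕ} (hn : 1 ≤ n) (s t : ℝ) :
    (pt s n t : ∀ _ : ℕ, ℝ) 0 = s * (1 - t) := by
  have h0n : (0:ℕ) ≠ n := by omega
  simp only [pt, lp.coeFn_add, lp.coeFn_smul, Pi.add_apply, Pi.smul_apply, dBasis_apply]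
  simp [h0n]

lemma pt_apply_self {n : ℕ} (hn : 1 ≤ n) (s t : ℝ) :
    (pt s n t : ∀ _ : ℕ, ℝ) n = t := by
  have h0n : n ≠ 0 := by omega
  simp only [pt, lp.coeFn_add, lp.coeFn_smul, Pi.add_apply, Pi.smul_apply, dBasis_apply]
  simp [h0n]

lemma pt_apply_ne {n m : ℕ} (hm0 : m ≠ 0) (hmn : m ≠ n) (s t : ℝ) :
    (pt s n t : ∀ _ : ℕ, ℝ) m = 0 := by
  simp only [pt, lp.coeFn_add, lp.coeFn_smul, Pi.add_apply, Pi.smul_apply, dBasis_apply]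
  simp [hm0, hmn]

lemma pt_one (s : ℝ) (n : ℕ) : pt s n 1 = dBasis n := by
  rw [pt]; module

lemma pt_zero_plus (n : ℕ) : pt 1 n 0 = dBasis 0 := by
  rw [pt]; module

lemma pt_zero_minus (n : ℕ) : pt (-1) n 0 = -dBasis 0 := by
  rw [pt]; module

lemma pt_mem {s : ℝ} (hs : s = 1 ∨ s = -1) {n : ℕ} (hn : 1 ≤ n) {t : ℝ}
    (ht0 : 0 ≤ t) (ht1 : t ≤ 1) : pt s n t ∈ DoubleFan := by
  rcases hs with rfl | rfl
  · exact Set.mem_union_left _ (Set.mem_biUnion (Set.mem_Ici.2 hn)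
      ⟨1 - t, t, by linarith, ht0, by ring, by rw [pt]; module⟩)
  · exact Set.mem_union_right _ (Set.mem_biUnion (Set.mem_Ici.2 hn)
      ⟨1 - t, t, by linarith, ht0, by ring, by rw [pt]; module⟩)

lemma mem_char {x : DFanAmbient} (hx : x ∈ DoubleFan) :
    ∃ s n t, (s = (1:ℝ) ∨ s = -1) ∧ 1 ≤ n ∧ 0 ≤ t ∧ t ≤ 1 ∧ x = pt s n t := by
  rcases hx with h | h <;> rw [Set.mem_iUnion₂] at h <;>
    obtain ⟨n, hn, a, b, ha, hb, hab, rfl⟩ := h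
  · exact ⟨1, n, b, Or.inl rfl, Set.mem_Ici.1 hn, hb, by linarith,
      by rw [show a = 1 - b by linarith, pt]; module⟩
  · exact ⟨-1, n, b, Or.inr rfl, Set.mem_Ici.1 hn, hb, by linarith,
      by rw [show a = 1 - b by linarith, pt]; module⟩

lemma eq_pt_of_coord {x : DFanAmbient} (hx : x ∈ DoubleFan) {n : ℕ} (hn : 1 ≤ n)
    (h : (x : ∀ _ : ℕ, ℝ) n ≠ 0) :
    ∃ s, (s = (1:ℝ) ∨ s = -1) ∧ 0 ≤ (x : ∀ _ : ℕ, ℝ) n ∧ (x : ∀ _ : ℕ, ℝ) n ≤ 1 ∧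
      x = pt s n ((x : ∀ _ : ℕ, ℝ) n) := by
  obtain ⟨s, m, t, hs, hm, ht0, ht1, rfl⟩ := mem_char hx
  by_cases hmn : m = n
  · subst hmn
    rw [pt_apply_self hm]
    exact ⟨s, hs, ht0, ht1, rfl⟩
  · exfalso
    exact h (pt_apply_ne (by omega) (fun hh => hmn hh.symm) s t)

lemma norm_dBasis (n : ℕ) : ‖dBasis n‖ = 1 := by
  have h2 : (0:ℝ) < (2 : ENNReal).toReal := by norm_num
  simpa [dBasis] using lp.norm_single (E := fun _ : ℕ => ℝ) h2 (fun _ : ℕ => (1:ℝ)) n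

lemma dist_pt_pt {s : ℝ} (hs : s = 1 ∨ s = -1) (n : ℕ) (t t' : ℝ) :
    dist (pt s n t) (pt s n t') ≤ 2 * |t - t'| := by
  rw [dist_eq_norm]
  have hd : pt s n t - pt s n t' = (s * (t' - t)) • dBasis 0 + (t - t') • dBasis n := by
    rw [pt, pt]; module
  rw [hd]
  have hs1 : |s| = 1 := by rcases hs with rfl | rfl <;> simp
  calc ‖(s * (t' - t)) • dBasis 0 + (t - t') • dBasis n‖
      ≤ ‖(s * (t' - t)) • dBasis 0‖ + ‖(t - t') • dBasis n‖ := norm_add_le _ _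
    _ = |s * (t' - t)| + |t - t'| := by
        rw [norm_smul, norm_smul, norm_dBasis, norm_dBasis, mul_one, mul_one,
          Real.norm_eq_abs, Real.norm_eq_abs]
    _ = 2 * |t - t'| := by rw [abs_mul, hs1, one_mul, abs_sub_comm]; ring

lemma coord_dist (x y : DFanAmbient) (n : ℕ) :
    |(x : ∀ _ : ℕ, ℝ) n - (y : ∀ _ : ℕ, ℝ) n| ≤ dist x y := by
  have h := lp.norm_apply_le_norm (E := fun _ : ℕ => ℝ) (p := 2) (by norm_num) (x - y) n
  rw [lp.coeFn_sub] at h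
  simpa [dist_eq_norm, Real.norm_eq_abs] using h

lemma continuous_coord_amb (n : ℕ) :
    Continuous (fun x : DFanAmbient => (x : ∀ _ : ℕ, ℝ) n) := by
  have : LipschitzWith 1 (fun x : DFanAmbient => (x : ∀ _ : ℕ, ℝ) n) :=
    LipschitzWith.of_dist_le_mul (fun x y => by
      rw [NNReal.coe_one, one_mul, Real.dist_eq]; exact coord_dist x y n)
  exact this.continuous

lemma continuous_coord (n : ℕ) :
    Continuous (fun x : ↥DoubleFan => ((x : DFanAmbient) : ∀ _ : ℕ, ℝ) n) :=
  (continuous_coord_amb n).comp continuous_subtype_val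

end DFanAux
namespace DFanAux

/-- Hypotheses for the piecewise linear map parameters. -/
structure PLH (α β c d : ℝ) : Prop where
  hα : 0 < α
  hαc : α < c
  hcβ : c < β
  hαd : α < d
  hdβ : d < β
  hβ1 : β ≤ 1

namespace PLH

variable {α β c d : ℝ}

lemma symm (h : PLH α β c d) : PLH α β d c := ⟨h.hα, h.hαd, h.hdβ, h.hαc, h.hcβ, h.hβ1⟩
lemma hαβ (h : PLH α β c d) : α < β := h.hαc.trans h.hcβ
lemma hc1 (h : PLH α β c d) : c < 1 := lt_of_lt_of_le h.hcβ h.hβ1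

end PLH

/-- The piecewise linear increasing reparametrization with breakpoint `(c, d)`. -/
def pl (α β c d t : ℝ) : ℝ :=
  if t ≤ c then α + (t - α) * ((d - α) / (c - α)) else β + (t - β) * ((β - d) / (β - c))

variable {α β c d : ℝ}

lemma pl_alpha (h : PLH α β c d) : pl α β c d α = α := by
  rw [pl, if_pos h.hαc.le]; ring

lemma pl_c (h : PLH α β c d) : pl α β c d c = d := by
  rw [pl, if_pos le_rfl]
  have hca : c - α ≠ 0 := by linarith [h.hαc]
  field_simp
  ring

lemma pl_beta (h : PLH α β c d) : pl α β c d β = β := by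
  rw [pl, if_neg (not_le.mpr h.hcβ)]; ring

lemma pl_inv (h : PLH α β c d) (t : ℝ) : pl α β d c (pl α β c d t) = t := by
  have hca : (0:ℝ) < c - α := by linarith [h.hαc]
  have hda : (0:ℝ) < d - α := by linarith [h.hαd]
  have hbc : (0:ℝ) < β - c := by linarith [h.hcβ]
  have hbd : (0:ℝ) < β - d := by linarith [h.hdβ]
  rw [pl, pl]
  by_cases ht : t ≤ c
  · rw [if_pos ht]
    have hle : α + (t - α) * ((d - α) / (c - α)) ≤ d := by
      have h1 : (t - α) * ((d - α) / (c - α)) ≤ (c - α) * ((d - α) / (c - α)) :=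
        mul_le_mul_of_nonneg_right (by linarith) (by positivity)
      have h2 : (c - α) * ((d - α) / (c - α)) = d - α := by field_simp
      linarith
    rw [if_pos hle]
    field_simp
    ring
  · push_neg at ht
    rw [if_neg (not_le.mpr ht)]
    have hgt : d < β + (t - β) * ((β - d) / (β - c)) := by
      have h1 : (β - t) * ((β - d) / (β - c)) < (β - c) * ((β - d) / (β - c)) :=
        mul_lt_mul_of_pos_right (by linarith) (by positivity)
      have h2 : (β - c) * ((β - d) / (β - c)) = β - d := by field_simp
      nlinarith
    rw [if_neg (not_le.mpr hgt)]
    field_simp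
    ring

lemma pl_mem_Icc (h : PLH α β c d) {t : ℝ} (ht : t ∈ Set.Icc α β) :
    pl α β c d t ∈ Set.Icc α β := by
  have hca : (0:ℝ) < c - α := by linarith [h.hαc]
  have hda : (0:ℝ) < d - α := by linarith [h.hαd]
  have hbc : (0:ℝ) < β - c := by linarith [h.hcβ]
  have hbd : (0:ℝ) < β - d := by linarith [h.hdβ]
  obtain ⟨ht1, ht2⟩ := ht
  rw [pl]
  by_cases htc : t ≤ c
  · rw [if_pos htc]
    constructor
    · have : 0 ≤ (t - α) * ((d - α) / (c - α)) := by
        apply mul_nonneg (by linarith) (by positivity)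
      linarith
    · have h1 : (t - α) * ((d - α) / (c - α)) ≤ (c - α) * ((d - α) / (c - α)) :=
        mul_le_mul_of_nonneg_right (by linarith) (by positivity)
      have h2 : (c - α) * ((d - α) / (c - α)) = d - α := by field_simp
      linarith [h.hdβ, h.hβ1]
  · push_neg at htc
    rw [if_neg (not_le.mpr htc)]
    constructor
    · have h1 : (β - t) * ((β - d) / (β - c)) < (β - c) * ((β - d) / (β - c)) :=
        mul_lt_mul_of_pos_right (by linarith) (by positivity)
      have h2 : (β - c) * ((β - d) / (β - c)) = β - d := by field_simp
      nlinarith [h.hαd]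
    · have : 0 ≤ (β - t) * ((β - d) / (β - c)) := by
        apply mul_nonneg (by linarith) (by positivity)
      nlinarith

lemma pl_mem_Ioo (h : PLH α β c d) {t : ℝ} (ht : t ∈ Set.Ioo α β) :
    pl α β c d t ∈ Set.Ioo α β := by
  have hca : (0:ℝ) < c - α := by linarith [h.hαc]
  have hda : (0:ℝ) < d - α := by linarith [h.hαd]
  have hbc : (0:ℝ) < β - c := by linarith [h.hcβ]
  have hbd : (0:ℝ) < β - d := by linarith [h.hdβ]
  obtain ⟨ht1, ht2⟩ := ht
  rw [pl]
  by_cases htc : t ≤ c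
  · rw [if_pos htc]
    constructor
    · have : 0 < (t - α) * ((d - α) / (c - α)) := by
        apply mul_pos (by linarith) (by positivity)
      linarith
    · have h1 : (t - α) * ((d - α) / (c - α)) ≤ (c - α) * ((d - α) / (c - α)) :=
        mul_le_mul_of_nonneg_right (by linarith) (by positivity)
      have h2 : (c - α) * ((d - α) / (c - α)) = d - α := by field_simp
      linarith [h.hdβ]
  · push_neg at htc
    rw [if_neg (not_le.mpr htc)]
    constructor
    · have h1 : (β - t) * ((β - d) / (β - c)) < (β - c) * ((β - d) / (β - c)) :=
        mul_lt_mul_of_pos_right (by linarith) (by positivity)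
      have h2 : (β - c) * ((β - d) / (β - c)) = β - d := by field_simp
      nlinarith [h.hαd]
    · have : 0 < (β - t) * ((β - d) / (β - c)) := by
        apply mul_pos (by linarith) (by positivity)
      nlinarith

lemma pl_continuous (h : PLH α β c d) : Continuous (pl α β c d) := by
  unfold pl
  apply Continuous.if_le (by fun_prop) (by fun_prop) continuous_id continuous_const
  intro t htc
  simp only [id] at htc
  have hca : c - α ≠ 0 := by linarith [h.hαc]
  have hbc : β - c ≠ 0 := by linarith [h.hcβ]
  rw [htc]
  field_simp
  ring

end DFanAux
namespace DFanAux

variable {α β c d : ℝ}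

/-- The slope factor of the second branch. -/
def mQ (α β c d : ℝ) : ℝ := (β - d) / (β - c)

/-- Scaling factor for the `e₀`-coordinate implementing the reparametrization `pl`. -/
def Rf (α β c d t : ℝ) : ℝ :=
  if t ≤ c then (1 - pl α β c d (min t c)) / (1 - min t c)
  else mQ α β c d + (1 - β) * (1 - mQ α β c d) / (1 - min t β)

lemma Rf_continuous (h : PLH α β c d) : Continuous (Rf α β c d) := by
  have hc1 : c < 1 := h.hc1
  have hbc : β - c ≠ 0 := by linarith [h.hcβ]
  have b1 : Continuous fun t : ℝ => (1 - pl α β c d (min t c)) / (1 - min t c) := by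
    apply Continuous.div
    · exact (continuous_const.sub ((pl_continuous h).comp (continuous_id.min continuous_const)))
    · fun_prop
    · intro t
      have : min t c ≤ c := min_le_right t c
      intro hzero
      have : (1:ℝ) - min t c > 0 := by linarith
      linarith
  have b2 : Continuous fun t : ℝ =>
      mQ α β c d + (1 - β) * (1 - mQ α β c d) / (1 - min t β) := by
    rcases eq_or_lt_of_le h.hβ1 with hβ | hβ
    · have hz : (1:ℝ) - β = 0 := by rw [hβ]; ring
      simp only [hz, zero_mul, zero_div, add_zero]
      exact continuous_const
    · apply Continuous.add continuous_const
      apply Continuous.div (by fun_prop) (by fun_prop)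
      intro t hzero
      have : min t β ≤ β := min_le_right t β
      have : (1:ℝ) - min t β > 0 := by linarith
      linarith
  apply Continuous.if_le b1 b2 continuous_id continuous_const
  intro t htc
  simp only [id] at htc
  rw [htc, min_eq_left le_rfl, min_eq_left (le_of_lt h.hcβ), pl_c h, mQ]
  have h1c : (1:ℝ) - c ≠ 0 := by linarith
  field_simp
  ring

lemma Rf_key (h : PLH α β c d) {t : ℝ} (htα : α ≤ t) (htβ : t ≤ β) :
    Rf α β c d t * (1 - t) = 1 - pl α β c d t := by
  have hbc : β - c ≠ 0 := by linarith [h.hcβ]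
  by_cases htc : t ≤ c
  · rw [Rf, if_pos htc, min_eq_left htc, pl, if_pos htc]
    have h1t : (1:ℝ) - t ≠ 0 := by
      have := h.hc1; intro hh; linarith
    field_simp
  · rw [Rf, if_neg htc, min_eq_left htβ, pl, if_neg htc]
    push_neg at htc
    rcases eq_or_lt_of_le (htβ.trans h.hβ1) with ht1 | ht1
    · -- t = 1, hence β = 1
      have hβ1 : β = 1 := le_antisymm h.hβ1 (ht1 ▸ htβ)
      rw [ht1, hβ1]
      simp
    · have h1t : (1:ℝ) - t ≠ 0 := by intro hh; linarith
      rw [mQ]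
      field_simp
      ring

end DFanAux
namespace DFanAux

variable {α β c d : ℝ} {n : ℕ}

/-- The reparametrization homeomorphism of the fan, as a raw map on ambient space. -/
def phiAmb (n : ℕ) (α β c d : ℝ) (x : DFanAmbient) : DFanAmbient :=
  if α ≤ (x : ∀ _ : ℕ, ℝ) n then
    (if (x : ∀ _ : ℕ, ℝ) n ≤ β then
      (Rf α β c d ((x : ∀ _ : ℕ, ℝ) n) * (x : ∀ _ : ℕ, ℝ) 0) • dBasis 0 +
        pl α β c d ((x : ∀ _ : ℕ, ℝ) n) • dBasis n
    else x)
  else x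

lemma formula_pt (h : PLH α β c d) (hn : 1 ≤ n) (s : ℝ) {t : ℝ}
    (htα : α ≤ t) (htβ : t ≤ β) :
    (Rf α β c d t * (s * (1 - t))) • dBasis 0 + pl α β c d t • dBasis n
      = pt s n (pl α β c d t) := by
  have hco : Rf α β c d t * (s * (1 - t)) = s * (1 - pl α β c d t) := by
    have hk := Rf_key h htα htβ
    calc Rf α β c d t * (s * (1 - t)) = s * (Rf α β c d t * (1 - t)) := by ring
      _ = s * (1 - pl α β c d t) := by rw [hk]
  rw [hco, pt]

lemma phiAmb_pt (h : PLH α β c d) (hn : 1 ≤ n) (s : ℝ) {t : ℝ}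
    (htα : α ≤ t) (htβ : t ≤ β) :
    phiAmb n α β c d (pt s n t) = pt s n (pl α β c d t) := by
  rw [phiAmb, pt_apply_self hn, pt_apply_zero hn, if_pos htα, if_pos htβ]
  exact formula_pt h hn s htα htβ

lemma phiAmb_eq_self (h : PLH α β c d) (hn : 1 ≤ n) {x : DFanAmbient} (hx : x ∈ DoubleFan)
    (hnot : ¬(α < (x : ∀ _ : ℕ, ℝ) n ∧ (x : ∀ _ : ℕ, ℝ) n < β)) :
    phiAmb n α β c d x = x := by
  by_cases h1 : α ≤ (x : ∀ _ : ℕ, ℝ) n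
  · by_cases h2 : (x : ∀ _ : ℕ, ℝ) n ≤ β
    · have hne : (x : ∀ _ : ℕ, ℝ) n ≠ 0 := by
        have := h.hα; intro hh; rw [hh] at h1; linarith
      obtain ⟨s, hs, _, _, hxeq⟩ := eq_pt_of_coord hx hn hne
      push_neg at hnot
      rcases eq_or_lt_of_le h1 with hα' | hα'
      · -- α = x n
        have hxeq' : x = pt s n α := by rw [hα']; exact hxeq
        rw [hxeq', phiAmb_pt h hn s le_rfl h.hαβ.le, pl_alpha h]
      · have hβ' : (x : ∀ _ : ℕ, ℝ) n = β := le_antisymm h2 (hnot hα')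
        have hxeq' : x = pt s n β := by rw [← hβ']; exact hxeq
        rw [hxeq', phiAmb_pt h hn s h.hαβ.le le_rfl, pl_beta h]
    · rw [phiAmb, if_pos h1, if_neg h2]
  · rw [phiAmb, if_neg h1]

lemma phiAmb_mem (h : PLH α β c d) (hn : 1 ≤ n) {x : DFanAmbient} (hx : x ∈ DoubleFan) :
    phiAmb n α β c d x ∈ DoubleFan := by
  by_cases hc : α < (x : ∀ _ : ℕ, ℝ) n ∧ (x : ∀ _ : ℕ, ℝ) n < β
  · have hne : (x : ∀ _ : ℕ, ℝ) n ≠ 0 := by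
      have := h.hα; intro hh; rw [hh] at hc; linarith [hc.1]
    obtain ⟨s, hs, _, _, hxeq⟩ := eq_pt_of_coord hx hn hne
    have heq := phiAmb_pt (t := (x : ∀ _ : ℕ, ℝ) n) h hn s hc.1.le hc.2.le
    rw [← hxeq] at heq
    rw [heq]
    have hIcc := pl_mem_Icc h ⟨hc.1.le, hc.2.le⟩
    exact pt_mem hs hn (le_trans h.hα.le hIcc.1) (le_trans hIcc.2 h.hβ1)
  · rw [phiAmb_eq_self h hn hx hc]; exact hx

lemma phiAmb_comp (h : PLH α β c d) (hn : 1 ≤ n) {x : DFanAmbient} (hx : x ∈ DoubleFan) :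
    phiAmb n α β d c (phiAmb n α β c d x) = x := by
  by_cases hc : α < (x : ∀ _ : ℕ, ℝ) n ∧ (x : ∀ _ : ℕ, ℝ) n < β
  · have hne : (x : ∀ _ : ℕ, ℝ) n ≠ 0 := by
      have := h.hα; intro hh; rw [hh] at hc; linarith [hc.1]
    obtain ⟨s, hs, _, _, hxeq⟩ := eq_pt_of_coord hx hn hne
    have heq := phiAmb_pt (t := (x : ∀ _ : ℕ, ℝ) n) h hn s hc.1.le hc.2.le
    rw [← hxeq] at heq
    have hIoo := pl_mem_Ioo h ⟨hc.1, hc.2⟩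
    have heq2 := phiAmb_pt (t := pl α β c d ((x : ∀ _ : ℕ, ℝ) n)) h.symm hn s
      hIoo.1.le hIoo.2.le
    rw [heq, heq2, pl_inv h]
    exact hxeq.symm
  · rw [phiAmb_eq_self h hn hx hc]
    exact phiAmb_eq_self h.symm hn hx hc

lemma phi_continuous (h : PLH α β c d) (hn : 1 ≤ n) :
    Continuous (fun x : ↥DoubleFan => phiAmb n α β c d (x : DFanAmbient)) := by
  simp only [phiAmb]
  have hform : Continuous (fun x : ↥DoubleFan =>
      (Rf α β c d (((x : DFanAmbient)) n) * ((x : DFanAmbient)) 0) • dBasis 0 +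
        pl α β c d (((x : DFanAmbient)) n) • dBasis n) := by
    apply Continuous.add
    · exact Continuous.smul
        (((Rf_continuous h).comp (continuous_coord n)).mul (continuous_coord 0)) continuous_const
    · exact Continuous.smul ((pl_continuous h).comp (continuous_coord n)) continuous_const
  have hinner : Continuous (fun x : ↥DoubleFan =>
      if ((x : DFanAmbient)) n ≤ β then
        (Rf α β c d (((x : DFanAmbient)) n) * ((x : DFanAmbient)) 0) • dBasis 0 +
          pl α β c d (((x : DFanAmbient)) n) • dBasis n
      else (x : DFanAmbient)) := by
    apply Continuous.if_le hform continuous_subtype_val (continuous_coord n) continuous_const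
    intro x hβ'
    have hne : ((x : DFanAmbient) : ∀ _ : ℕ, ℝ) n ≠ 0 := by
      rw [hβ']; intro hh; have := h.hα; have := h.hαβ; linarith
    obtain ⟨s, hs, _, _, hxeq⟩ := eq_pt_of_coord x.2 hn hne
    have hxeq' : (x : DFanAmbient) = pt s n β := by rw [← hβ']; exact hxeq
    rw [hβ', hxeq', pt_apply_zero hn, formula_pt h hn s h.hαβ.le le_rfl, pl_beta h]
  apply Continuous.if_le hinner continuous_subtype_val continuous_const (continuous_coord n)
  intro x hα'
  -- hα' : α = x n
  have hne : ((x : DFanAmbient) : ∀ _ : ℕ, ℝ) n ≠ 0 := by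
    rw [← hα']; exact h.hα.ne'
  obtain ⟨s, hs, _, _, hxeq⟩ := eq_pt_of_coord x.2 hn hne
  have hxeq' : (x : DFanAmbient) = pt s n α := by rw [hα']; exact hxeq
  rw [if_pos (by rw [← hα']; exact h.hαβ.le), ← hα', hxeq', pt_apply_zero hn,
    formula_pt h hn s le_rfl h.hαβ.le, pl_alpha h]

/-- The reparametrization homeomorphism of the double fan. -/
def phiHomeo (h : PLH α β c d) (hn : 1 ≤ n) : ↥DoubleFan ≃ₜ ↥DoubleFan where
  toFun x := ⟨phiAmb n α β c d (x : DFanAmbient), phiAmb_mem h hn x.2⟩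
  invFun x := ⟨phiAmb n α β d c (x : DFanAmbient), phiAmb_mem h.symm hn x.2⟩
  left_inv x := Subtype.ext (phiAmb_comp h hn x.2)
  right_inv x := Subtype.ext (phiAmb_comp h.symm hn x.2)
  continuous_toFun := (phi_continuous h hn).subtype_mk _
  continuous_invFun := (phi_continuous h.symm hn).subtype_mk _

lemma phiHomeo_apply (h : PLH α β c d) (hn : 1 ≤ n) (x : ↥DoubleFan) :
    (phiHomeo h hn x : DFanAmbient) = phiAmb n α β c d (x : DFanAmbient) := rfl

lemma phiHomeo_mem (h : PLH α β c d) (hn : 1 ≤ n)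
    (hfree : ∀ k : ℕ, 1 ≤ k → ¬(α < ((k : ℝ))⁻¹ ∧ ((k : ℝ))⁻¹ < β)) :
    phiHomeo h hn ∈ DGroup := by
  intro x hx
  obtain ⟨a, k, m, ha, hk, hm, hxeq⟩ := hx
  have hpt : ∃ s, (s = (1:ℝ) ∨ s = -1) ∧ (x : DFanAmbient) = pt s m ((k : ℝ))⁻¹ := by
    rcases ha with rfl | rfl
    · exact ⟨1, Or.inl rfl, by rw [hxeq, pt]; module⟩
    · exact ⟨-1, Or.inr rfl, by rw [hxeq, pt]; module⟩
  obtain ⟨s, hs, hxpt⟩ := hpt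
  apply Subtype.ext
  show phiAmb n α β c d (x : DFanAmbient) = (x : DFanAmbient)
  by_cases hmn : m = n
  · subst hmn
    apply phiAmb_eq_self h hn x.2
    rw [hxpt, pt_apply_self hm]
    exact hfree k hk
  · apply phiAmb_eq_self h hn x.2
    rw [hxpt, pt_apply_ne (by omega) (fun hh => hmn hh.symm)]
    rintro ⟨hcon, -⟩
    exact absurd hcon (not_lt.mpr h.hα.le)

end DFanAux
namespace DFanAux

open TopologicalSpace

lemma co_agree {X : Type} [TopologicalSpace X] {O : Set C(X, X)} (hO : IsOpen O) :
    ∀ f₀ ∈ O, ∃ KK : Set X, IsCompact KK ∧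
      ∀ g : C(X, X), (∀ x ∈ KK, g x = f₀ x) → g ∈ O := by
  have hO' : GenerateOpen
      (Set.image2 (fun K U => {f : C(X, X) | Set.MapsTo f K U})
        {K : Set X | IsCompact K} {U : Set X | IsOpen U}) O := hO
  clear hO
  induction hO' with
  | basic s hs =>
    obtain ⟨K, hK, U, hU, rfl⟩ := hs
    intro f₀ hf₀
    exact ⟨K, hK, fun g hg x hx => by rw [hg x hx]; exact hf₀ hx⟩
  | univ =>
    intro f₀ _
    exact ⟨∅, isCompact_empty, fun g _ => trivial⟩
  | inter O1 O2 _ _ ih1 ih2 =>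
    intro f₀ hf₀
    obtain ⟨K1, hK1, hg1⟩ := ih1 f₀ hf₀.1
    obtain ⟨K2, hK2, hg2⟩ := ih2 f₀ hf₀.2
    exact ⟨K1 ∪ K2, hK1.union hK2,
      fun g hg => ⟨hg1 g (fun x hx => hg x (Set.mem_union_left _ hx)),
        hg2 g (fun x hx => hg x (Set.mem_union_right _ hx))⟩⟩
  | sUnion S _ ih =>
    intro f₀ hf₀
    obtain ⟨sO, hsO, hf⟩ := hf₀
    obtain ⟨KK, hKK, hg⟩ := ih sO hsO f₀ hf
    exact ⟨KK, hKK, fun g hgg => ⟨sO, hsO, hg g hgg⟩⟩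

lemma nhds_one_agree {V : Set DGroup} (hV : V ∈ nhds 1) :
    ∃ KK : Set ↥DoubleFan, IsCompact KK ∧
      ∀ g : DGroup, (∀ x ∈ KK, (g : ↥DoubleFan ≃ₜ ↥DoubleFan) x = x) → g ∈ V := by
  set ι : DGroup → C(↥DoubleFan, ↥DoubleFan) :=
    fun g : DGroup => toContinuousMap (g : ↥DoubleFan ≃ₜ ↥DoubleFan) with hι
  have h2 : V ∈ Filter.comap ι (nhds (ι 1)) := by
    rw [← nhds_induced]
    exact hV
  obtain ⟨W, hW, hWV⟩ := Filter.mem_comap.mp h2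
  obtain ⟨O, hOW, hO, hmem⟩ := mem_nhds_iff.mp hW
  obtain ⟨KK, hKK, hagree⟩ := co_agree hO (ι 1) hmem
  refine ⟨KK, hKK, fun g hg => ?_⟩
  apply hWV
  apply Set.mem_preimage.mpr
  apply hOW
  apply hagree
  intro x hx
  show (g : ↥DoubleFan ≃ₜ ↥DoubleFan) x = ι 1 x
  rw [hg x hx]
  rfl

lemma exists_free_wedge (KK : Set ↥DoubleFan) (hK : IsCompact KK) (k : ℕ) (hk : 1 ≤ k) :
    ∃ n, 1 ≤ n ∧ ∀ x ∈ KK, ((x : DFanAmbient) : ∀ _ : ℕ, ℝ) n ≤ ((k : ℝ))⁻¹ := by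
  have hkpos : (0:ℝ) < (k : ℝ)⁻¹ := by positivity
  by_contra hcon
  push_neg at hcon
  -- for every n ≥ 1 there is a point of KK deep in wedge n
  have hsep : ∀ n, 1 ≤ n → ∃ x ∈ KK, ((k:ℝ))⁻¹ < ((x : DFanAmbient) : ∀ _ : ℕ, ℝ) n := by
    intro n hn
    obtain ⟨x, hx, hxn⟩ := hcon n hn
    exact ⟨x, hx, hxn⟩
  -- totally bounded: finitely many balls of radius 1/(2k)
  obtain ⟨T, hTfin, hTcov⟩ := (Metric.totallyBounded_iff.mp hK.totallyBounded)
    ((k:ℝ)⁻¹ / 2) (by positivity)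
  -- map: each n ≥ 1 to a center of a ball containing its deep point
  choose xw hxwK hxwd using hsep
  have hcent : ∀ n (hn : 1 ≤ n), ∃ t ∈ T, xw n hn ∈ Metric.ball t ((k:ℝ)⁻¹ / 2) := by
    intro n hn
    have := hTcov (hxwK n hn)
    simpa using this
  choose cent hcentT hcentb using hcent
  -- injectivity-type contradiction via pigeonhole on ℕ ≥ 1
  have hKdist : ∀ (n m : ℕ) (hn : 1 ≤ n) (hm : 1 ≤ m), n ≠ m →
      cent n hn ≠ cent m hm := by
    intro n m hn hm hnm heq
    have hd1 := hcentb n hn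
    have hd2 := hcentb m hm
    rw [heq] at hd1
    have hdist : dist (xw n hn) (xw m hm) < (k:ℝ)⁻¹ := by
      have htri := dist_triangle (xw n hn) (cent m hm) (xw m hm)
      rw [Metric.mem_ball] at hd1 hd2
      have hcomm : dist (cent m hm) (xw m hm) = dist (xw m hm) (cent m hm) := dist_comm _ _
      linarith
    -- but the coordinates force distance ≥ 1/k
    have hxm0 : (((xw m hm : ↥DoubleFan) : DFanAmbient) : ∀ _ : ℕ, ℝ) n = 0 := by
      have hne : (((xw m hm : ↥DoubleFan) : DFanAmbient) : ∀ _ : ℕ, ℝ) m ≠ 0 := by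
        have := hxwd m hm; intro hh; rw [hh] at this; linarith
      obtain ⟨s, hs, _, _, hxeq⟩ := eq_pt_of_coord (xw m hm).2 hm hne
      rw [hxeq]
      exact pt_apply_ne (by omega) hnm s _
    have hge : (k:ℝ)⁻¹ < dist (xw n hn) (xw m hm) := by
      have hcd := coord_dist ((xw n hn : ↥DoubleFan) : DFanAmbient)
        ((xw m hm : ↥DoubleFan) : DFanAmbient) n
      rw [hxm0, sub_zero] at hcd
      have habs : (k:ℝ)⁻¹ < |(((xw n hn : ↥DoubleFan) : DFanAmbient) : ∀ _ : ℕ, ℝ) n| :=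
        lt_of_lt_of_le (hxwd n hn) (le_abs_self _)
      calc (k:ℝ)⁻¹ < _ := habs
        _ ≤ dist ((xw n hn : ↥DoubleFan) : DFanAmbient) ((xw m hm : ↥DoubleFan) : DFanAmbient) := hcd
        _ = dist (xw n hn) (xw m hm) := (Subtype.dist_eq _ _).symm
    linarith
  -- the map n ↦ cent n is injective from an infinite set into a finite set
  have : Set.InjOn (fun n : ℕ => if hn : 1 ≤ n then cent n hn else dPlus)
      (Set.Ici 1) := by
    intro a ha b hb hab
    by_contra hne
    have ha' : 1 ≤ a := ha
    have hb' : 1 ≤ b := hb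
    simp only [dif_pos ha', dif_pos hb'] at hab
    exact hKdist a b ha' hb' hne hab
  have hfin : (Set.Ici (1:ℕ)).Finite := by
    have himg : (fun n : ℕ => if hn : 1 ≤ n then cent n hn else dPlus) ''
        (Set.Ici 1) ⊆ T := by
      rintro y ⟨n, hn, rfl⟩
      have hn' : 1 ≤ n := hn
      simp only [dif_pos hn']
      exact hcentT n hn'
    exact Set.Finite.of_finite_image (hTfin.subset himg) this
  exact Set.Ici_infinite 1 hfin

end DFanAux
namespace DFanAux

lemma core_step (f : ↥DoubleFan → ℝ) (hc : Continuous f)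
    {ε : ℝ} (hε : 0 < ε) {V : Set DGroup}
    (hVf : ∀ x : ↥DoubleFan, ∀ v ∈ V, |f x - f ((v : ↥DoubleFan ≃ₜ ↥DoubleFan) x)| < ε)
    {KK : Set ↥DoubleFan}
    (hKV : ∀ g : DGroup, (∀ x ∈ KK, (g : ↥DoubleFan ≃ₜ ↥DoubleFan) x = x) → g ∈ V)
    {n : ℕ} (hn : 1 ≤ n)
    {α β : ℝ} (hα : 0 < α) (hαβ : α < β) (hβ1 : β ≤ 1)
    (hfree : ∀ m : ℕ, 1 ≤ m → ¬(α < ((m : ℝ))⁻¹ ∧ ((m : ℝ))⁻¹ < β))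
    (hKα : ∀ x ∈ KK, ((x : DFanAmbient) : ∀ _ : ℕ, ℝ) n ≤ α)
    {s : ℝ} (hs : s = 1 ∨ s = -1)
    (hm1 : pt s n α ∈ DoubleFan) (hm2 : pt s n β ∈ DoubleFan) :
    |f ⟨pt s n α, hm1⟩ - f ⟨pt s n β, hm2⟩| ≤ 2 * ε := by
  set Pα : ↥DoubleFan := ⟨pt s n α, hm1⟩ with hPα
  set Pβ : ↥DoubleFan := ⟨pt s n β, hm2⟩ with hPβ
  obtain ⟨δ₁, hδ₁, H₁⟩ := Metric.continuousAt_iff.mp (hc.continuousAt (x := Pα))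
    (ε / 2) (by positivity)
  obtain ⟨δ₂, hδ₂, H₂⟩ := Metric.continuousAt_iff.mp (hc.continuousAt (x := Pβ))
    (ε / 2) (by positivity)
  set η := min (min δ₁ δ₂ / 4) ((β - α) / 4) with hηdef
  have hηpos : 0 < η := by
    apply lt_min (by positivity) (by linarith)
  have hηδ₁ : η ≤ δ₁ / 4 := le_trans (min_le_left _ _) (by
    have : min δ₁ δ₂ ≤ δ₁ := min_le_left _ _
    linarith)
  have hηδ₂ : η ≤ δ₂ / 4 := le_trans (min_le_left _ _) (by
    have : min δ₁ δ₂ ≤ δ₂ := min_le_right _ _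
    linarith)
  have hηβα : η ≤ (β - α) / 4 := min_le_right _ _
  set c := α + η with hcdef
  set d := β - η with hddef
  have hplh : PLH α β c d := ⟨hα, by linarith, by linarith, by linarith, by linarith, hβ1⟩
  set g : DGroup := ⟨phiHomeo hplh hn, phiHomeo_mem hplh hn hfree⟩ with hgdef
  have hgV : g ∈ V := by
    apply hKV
    intro x hx
    apply Subtype.ext
    show phiAmb n α β c d (x : DFanAmbient) = (x : DFanAmbient)
    apply phiAmb_eq_self hplh hn x.2
    rintro ⟨hh, -⟩
    exact absurd hh (not_lt.mpr (hKα x hx))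
  have hc0 : 0 ≤ c := by linarith
  have hc1 : c ≤ 1 := by linarith
  have hd0 : 0 ≤ d := by linarith
  have hd1 : d ≤ 1 := by linarith
  set X : ↥DoubleFan := ⟨pt s n c, pt_mem hs hn hc0 hc1⟩ with hXdef
  set Y : ↥DoubleFan := ⟨pt s n d, pt_mem hs hn hd0 hd1⟩ with hYdef
  have hgX : (g : ↥DoubleFan ≃ₜ ↥DoubleFan) X = Y := by
    apply Subtype.ext
    show phiAmb n α β c d (pt s n c) = pt s n d
    rw [phiAmb_pt hplh hn s (by linarith) (by linarith), pl_c hplh]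
  have h3 := hVf X g hgV
  rw [hgX] at h3
  have h1 : |f X - f Pα| < ε / 2 := by
    have hdist : dist X Pα < δ₁ := by
      rw [Subtype.dist_eq]
      calc dist (pt s n c) (pt s n α) ≤ 2 * |c - α| := dist_pt_pt hs n c α
        _ = 2 * η := by rw [show c - α = η by ring, abs_of_pos hηpos]
        _ < δ₁ := by linarith
    have := H₁ hdist
    rwa [Real.dist_eq] at this
  have h2 : |f Y - f Pβ| < ε / 2 := by
    have hdist : dist Y Pβ < δ₂ := by
      rw [Subtype.dist_eq]
      calc dist (pt s n d) (pt s n β) ≤ 2 * |d - β| := dist_pt_pt hs n d β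
        _ = 2 * η := by rw [show d - β = -η by ring, abs_neg, abs_of_pos hηpos]
        _ < δ₂ := by linarith
    have := H₂ hdist
    rwa [Real.dist_eq] at this
  have t1 : |f Pα - f Pβ| ≤ |f Pα - f X| + |f X - f Pβ| := abs_sub_le _ _ _
  have t2 : |f X - f Pβ| ≤ |f X - f Y| + |f Y - f Pβ| := abs_sub_le _ _ _
  have f1 : |f Pα - f X| = |f X - f Pα| := abs_sub_comm _ _
  linarith

lemma chain (f : ↥DoubleFan → ℝ) (hc : Continuous f)
    {ε : ℝ} (hε : 0 < ε) {V : Set DGroup}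
    (hVf : ∀ x : ↥DoubleFan, ∀ v ∈ V, |f x - f ((v : ↥DoubleFan ≃ₜ ↥DoubleFan) x)| < ε)
    {KK : Set ↥DoubleFan}
    (hKV : ∀ g : DGroup, (∀ x ∈ KK, (g : ↥DoubleFan ≃ₜ ↥DoubleFan) x = x) → g ∈ V)
    {n : ℕ} (hn : 1 ≤ n) {k : ℕ}
    (hKk : ∀ x ∈ KK, ((x : DFanAmbient) : ∀ _ : ℕ, ℝ) n ≤ ((k : ℝ))⁻¹)
    {s : ℝ} (hs : s = 1 ∨ s = -1) :
    ∀ j : ℕ, 1 ≤ j → j ≤ k →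
      ∀ (hmj : pt s n ((j : ℝ))⁻¹ ∈ DoubleFan) (hm1 : pt s n 1 ∈ DoubleFan),
      |f ⟨pt s n ((j : ℝ))⁻¹, hmj⟩ - f ⟨pt s n 1, hm1⟩| ≤ 2 * ε * ((j : ℝ) - 1) := by
  refine Nat.le_induction ?_ ?_
  · intro hk hmj hm1
    have heq : (⟨pt s n (((1:ℕ) : ℝ))⁻¹, hmj⟩ : ↥DoubleFan) = ⟨pt s n 1, hm1⟩ :=
      Subtype.ext (by norm_num)
    rw [heq]
    simp
  · intro j hj ih hjk hmj hm1
    have hjk' : j ≤ k := by omega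
    have hjpos : (0:ℝ) < (j : ℝ) := by exact_mod_cast hj
    have hj1pos : (0:ℝ) < ((j+1 : ℕ) : ℝ) := by positivity
    have hmem_j : pt s n (((j:ℕ) : ℝ))⁻¹ ∈ DoubleFan :=
      pt_mem hs hn (by positivity) (inv_le_one_of_one_le₀ (by exact_mod_cast hj))
    have hstep : |f ⟨pt s n (((j+1:ℕ) : ℝ))⁻¹, hmj⟩ - f ⟨pt s n (((j:ℕ) : ℝ))⁻¹, hmem_j⟩|
        ≤ 2 * ε := by
      apply core_step f hc hε hVf hKV hn
        (α := (((j+1:ℕ) : ℝ))⁻¹) (β := (((j:ℕ) : ℝ))⁻¹)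
        (by positivity)
        (by
          apply inv_strictAnti₀ hjpos
          push_cast; linarith)
        (inv_le_one_of_one_le₀ (by exact_mod_cast hj))
        ?_ ?_ hs
      · -- no inverse integer strictly between
        rintro m hm ⟨hm1', hm2'⟩
        have hmpos : (0:ℝ) < (m : ℝ) := by exact_mod_cast hm
        have hlt1 : (m : ℝ) < ((j+1:ℕ) : ℝ) := (inv_lt_inv₀ hj1pos hmpos).mp hm1'
        have hlt2 : ((j:ℕ) : ℝ) < (m : ℝ) := (inv_lt_inv₀ hmpos hjpos).mp hm2'
        have h1 : m < j + 1 := by exact_mod_cast hlt1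
        have h2 : j < m := by exact_mod_cast hlt2
        omega
      · intro x hx
        refine le_trans (hKk x hx) ?_
        apply inv_anti₀ hj1pos
        exact_mod_cast hjk
    have htri : |f ⟨pt s n (((j+1:ℕ) : ℝ))⁻¹, hmj⟩ - f ⟨pt s n 1, hm1⟩|
        ≤ |f ⟨pt s n (((j+1:ℕ) : ℝ))⁻¹, hmj⟩ - f ⟨pt s n (((j:ℕ) : ℝ))⁻¹, hmem_j⟩|
          + |f ⟨pt s n (((j:ℕ) : ℝ))⁻¹, hmem_j⟩ - f ⟨pt s n 1, hm1⟩| := abs_sub_le _ _ _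
    have hih := ih hjk' hmem_j hm1
    have hcast : ((j+1 : ℕ) : ℝ) - 1 = ((j : ℕ) : ℝ) - 1 + 1 := by push_cast; ring
    rw [hcast]
    have hεj : 0 ≤ (j : ℝ) - 1 := by
      have : (1:ℝ) ≤ (j : ℝ) := by exact_mod_cast hj
      linarith
    nlinarith [htri, hstep, hih]

end DFanAux
theorem stmt_15 (f : ↥DoubleFan → ℝ) (hc : Continuous f)
    (hb : ∃ C : ℝ, ∀ x : ↥DoubleFan, |f x| ≤ C)
    (hu : ∀ ε : ℝ, 0 < ε → ∃ V ∈ nhds (1 : DGroup), ∀ x : ↥DoubleFan, ∀ v ∈ V,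
      |f x - f ((v : ↥DoubleFan ≃ₜ ↥DoubleFan) x)| < ε) :
    f dPlus = f dMinus := by
  classical
  open DFanAux in
  by_contra hne
  have hθ : 0 < |f dPlus - f dMinus| := abs_pos.mpr (sub_ne_zero.mpr hne)
  set θ := |f dPlus - f dMinus| with hθdef
  obtain ⟨δ₁, hδ₁, H₁⟩ := Metric.continuousAt_iff.mp (hc.continuousAt (x := dPlus))
    (θ / 4) (by positivity)
  obtain ⟨δ₂, hδ₂, H₂⟩ := Metric.continuousAt_iff.mp (hc.continuousAt (x := dMinus))
    (θ / 4) (by positivity)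
  obtain ⟨k, hk⟩ := exists_nat_gt (max 1 (2 / min δ₁ δ₂))
  have hk1R : (1 : ℝ) < (k : ℝ) := lt_of_le_of_lt (le_max_left _ _) hk
  have hk1 : 1 ≤ k := by exact_mod_cast hk1R.le
  have hkpos : (0:ℝ) < (k : ℝ) := by linarith
  have hmpos : 0 < min δ₁ δ₂ := lt_min hδ₁ hδ₂
  have hkd : 2 * ((k : ℝ))⁻¹ < min δ₁ δ₂ := by
    have h2 : 2 / min δ₁ δ₂ < (k : ℝ) := lt_of_le_of_lt (le_max_right _ _) hk
    rw [div_lt_iff₀ hmpos] at h2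
    rw [show (2:ℝ) * ((k:ℝ))⁻¹ = 2 / (k:ℝ) by ring, div_lt_iff₀ hkpos]
    nlinarith
  set ε := θ / (8 * (k : ℝ)) with hεdef
  have hε : 0 < ε := by
    apply div_pos hθ
    nlinarith
  obtain ⟨V, hVnhds, hVf⟩ := hu ε hε
  obtain ⟨KK, hKKc, hKV⟩ := DFanAux.nhds_one_agree hVnhds
  obtain ⟨n, hn, hKk⟩ := DFanAux.exists_free_wedge KK hKKc k hk1
  have hkinv0 : (0:ℝ) ≤ ((k:ℝ))⁻¹ := by positivity
  have hkinv1 : ((k:ℝ))⁻¹ ≤ 1 := inv_le_one_of_one_le₀ hk1R.le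
  have hmkP : DFanAux.pt 1 n ((k : ℝ))⁻¹ ∈ DoubleFan :=
    DFanAux.pt_mem (Or.inl rfl) hn hkinv0 hkinv1
  have hmkM : DFanAux.pt (-1) n ((k : ℝ))⁻¹ ∈ DoubleFan :=
    DFanAux.pt_mem (Or.inr rfl) hn hkinv0 hkinv1
  have hm1P : DFanAux.pt 1 n 1 ∈ DoubleFan :=
    DFanAux.pt_mem (Or.inl rfl) hn zero_le_one le_rfl
  have hm1M : DFanAux.pt (-1) n 1 ∈ DoubleFan :=
    DFanAux.pt_mem (Or.inr rfl) hn zero_le_one le_rfl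
  have hchainP := DFanAux.chain f hc hε hVf hKV hn hKk (Or.inl rfl) k hk1 le_rfl hmkP hm1P
  have hchainM := DFanAux.chain f hc hε hVf hKV hn hKk (Or.inr rfl) k hk1 le_rfl hmkM hm1M
  -- the two chain endpoints at t = 1 agree
  have hmid : f (⟨DFanAux.pt 1 n 1, hm1P⟩ : ↥DoubleFan) = f ⟨DFanAux.pt (-1) n 1, hm1M⟩ :=
    congrArg f (Subtype.ext (show DFanAux.pt 1 n 1 = DFanAux.pt (-1) n 1 by
      rw [DFanAux.pt_one, DFanAux.pt_one]))
  -- endpoint estimates from continuity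
  have hend1 : |f (⟨DFanAux.pt 1 n ((k : ℝ))⁻¹, hmkP⟩ : ↥DoubleFan) - f dPlus| < θ / 4 := by
    have hdist : dist (⟨DFanAux.pt 1 n ((k : ℝ))⁻¹, hmkP⟩ : ↥DoubleFan) dPlus < δ₁ := by
      rw [Subtype.dist_eq]
      show dist (DFanAux.pt 1 n ((k : ℝ))⁻¹) (dBasis 0) < δ₁
      rw [← DFanAux.pt_zero_plus n]
      calc dist (DFanAux.pt 1 n ((k : ℝ))⁻¹) (DFanAux.pt 1 n 0)
          ≤ 2 * |((k : ℝ))⁻¹ - 0| := DFanAux.dist_pt_pt (Or.inl rfl) n _ _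
        _ = 2 * ((k : ℝ))⁻¹ := by rw [sub_zero, abs_of_nonneg hkinv0]
        _ < δ₁ := lt_of_lt_of_le hkd (min_le_left _ _)
    have := H₁ hdist
    rwa [Real.dist_eq] at this
  have hend2 : |f (⟨DFanAux.pt (-1) n ((k : ℝ))⁻¹, hmkM⟩ : ↥DoubleFan) - f dMinus| < θ / 4 := by
    have hdist : dist (⟨DFanAux.pt (-1) n ((k : ℝ))⁻¹, hmkM⟩ : ↥DoubleFan) dMinus < δ₂ := by
      rw [Subtype.dist_eq]
      show dist (DFanAux.pt (-1) n ((k : ℝ))⁻¹) (-dBasis 0) < δ₂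
      rw [← DFanAux.pt_zero_minus n]
      calc dist (DFanAux.pt (-1) n ((k : ℝ))⁻¹) (DFanAux.pt (-1) n 0)
          ≤ 2 * |((k : ℝ))⁻¹ - 0| := DFanAux.dist_pt_pt (Or.inr rfl) n _ _
        _ = 2 * ((k : ℝ))⁻¹ := by rw [sub_zero, abs_of_nonneg hkinv0]
        _ < δ₂ := lt_of_lt_of_le hkd (min_le_right _ _)
    have := H₂ hdist
    rwa [Real.dist_eq] at this
  -- assemble
  set A := f dPlus
  set B := f (⟨DFanAux.pt 1 n ((k : ℝ))⁻¹, hmkP⟩ : ↥DoubleFan)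
  set C := f (⟨DFanAux.pt 1 n 1, hm1P⟩ : ↥DoubleFan)
  set D := f (⟨DFanAux.pt (-1) n ((k : ℝ))⁻¹, hmkM⟩ : ↥DoubleFan)
  set E := f dMinus
  have hC' : f (⟨DFanAux.pt (-1) n 1, hm1M⟩ : ↥DoubleFan) = C := hmid.symm
  rw [hC'] at hchainM
  have h1 : |A - B| < θ / 4 := by rw [abs_sub_comm]; exact hend1
  have h4 : |D - E| < θ / 4 := hend2
  have habc : |A - C| ≤ |A - B| + |B - C| := abs_sub_le _ _ _
  have hacd : |A - D| ≤ |A - C| + |C - D| := abs_sub_le _ _ _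
  have hade : |A - E| ≤ |A - D| + |D - E| := abs_sub_le _ _ _
  have hCD : |C - D| = |D - C| := abs_sub_comm _ _
  have hbound : 2 * (2 * ε * ((k : ℝ) - 1)) < θ / 2 := by
    rw [hεdef]
    rw [show 2 * (2 * (θ / (8 * (k:ℝ))) * ((k:ℝ) - 1)) = θ / 2 * (((k:ℝ) - 1) / (k:ℝ)) by
      field_simp; ring]
    have hfrac : ((k:ℝ) - 1) / (k:ℝ) < 1 := by
      rw [div_lt_one hkpos]; linarith
    nlinarith
  have : θ ≤ |A - E| := le_of_eq hθdef
  linarith
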